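/- Suppose φ, ψ ∈ A(D) are unit-norm and the Teichmüller geodesics they generate coincide, in the sense that for all s,t ∈ [0,1), λ(s\bar{φ}/|φ| − t\bar{ψ}/|ψ|) = |s − t|. Then φ = ψ almost everywhere. -/

import Mathlib

open MeasureTheory Complex

noncomputable section

/-- The open unit disk in ℂ. -/
def 𝔻 : Set ℂ := Metric.ball 0 1

/-- Planar Lebesgue measure restricted to the unit disk. -/
def vD : MeasureTheory.Measure ℂ := MeasureTheory.volume.restrict 𝔻

/-- `A(D)`: holomorphic on the disk and integrable there. -/
def AD (φ : ℂ → ℂ) : Prop := DifferentiableOn ℂ φ 𝔻 ∧ MeasureTheory.Integrable φ vD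

/-- L¹ norm over the disk. -/
def nrm (φ : ℂ → ℂ) : ℝ := ∫ z, ‖φ z‖ ∂vD

/-- Pairing Re ∫_D μ φ. -/
def pair (μ φ : ℂ → ℂ) : ℝ := (∫ z, μ z * φ z ∂vD).re

/-- Infinitesimal Teichmüller norm. -/
def lam (μ : ℂ → ℂ) : ℝ := sSup {r : ℝ | ∃ φ, AD φ ∧ nrm φ = 1 ∧ r = pair μ φ}

/-- Unit Teichmüller differential `conj φ / |φ|`. -/
def tmu (φ : ℂ → ℂ) (z : ℂ) : ℂ := (starRingEnd ℂ) (φ z) / ((‖φ z‖ : ℝ) : ℂ)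

/-- Cosine of the angle between geodesic directions. -/
def ang (φ ψ : ℂ → ℂ) : ℝ := (∫ z, tmu φ z * ψ z ∂vD).re

end

lemma tmu_norm_le (φ : ℂ → ℂ) (z : ℂ) : ‖tmu φ z‖ ≤ 1 := by
  unfold tmu
  rcases eq_or_ne (φ z) 0 with h | h
  · simp [h]
  · rw [norm_div]
    have habs : ‖φ z‖ ≠ 0 := norm_ne_zero_iff.mpr h
    simp only [Complex.norm_conj, Complex.norm_real, norm_norm]
    rw [div_self habs]

lemma tmu_mul_self (ψ : ℂ → ℂ) (z : ℂ) :
    tmu ψ z * ψ z = ((‖ψ z‖ : ℝ) : ℂ) := by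
  unfold tmu
  rcases eq_or_ne (ψ z) 0 with h | h
  · simp [h]
  · have habs : ((‖ψ z‖ : ℝ) : ℂ) ≠ 0 := by
      exact Complex.ofReal_ne_zero.mpr (norm_ne_zero_iff.mpr h)
    field_simp
    norm_cast
    rw [mul_comm, Complex.mul_conj, Complex.normSq_eq_norm_sq]

lemma tmu_aesm {φ : ℂ → ℂ} (hφ : AD φ) : AEStronglyMeasurable (tmu φ) vD := by
  have hmeas : Measurable (fun w : ℂ => (starRingEnd ℂ) w * (((‖w‖)⁻¹ : ℝ) : ℂ)) := by
    exact (continuous_conj.measurable).mul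
      (Complex.measurable_ofReal.comp (continuous_norm.measurable.inv))
  have heq : tmu φ = (fun w : ℂ => (starRingEnd ℂ) w * (((‖w‖)⁻¹ : ℝ) : ℂ)) ∘ φ := by
    funext z
    simp [tmu, div_eq_mul_inv, Complex.ofReal_inv, Function.comp]
  rw [heq]
  exact (hmeas.comp_aemeasurable hφ.2.aemeasurable).aestronglyMeasurable

-- integrability of μ * χ for bounded ae-measurable μ
lemma integrable_mul_of_bdd {μ χ : ℂ → ℂ} (hμ : AEStronglyMeasurable μ vD)
    (hb : ∀ z, ‖μ z‖ ≤ 1) (hχ : Integrable χ vD) :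
    Integrable (fun z => μ z * χ z) vD :=
  hχ.bdd_mul hμ (ae_of_all _ hb)

-- upper bound on pair
lemma pair_le_one {μ χ : ℂ → ℂ} (hb : ∀ z, ‖μ z‖ ≤ 1) (hχ : Integrable χ vD)
    (hn : nrm χ = 1) : pair μ χ ≤ 1 := by
  have h1 : pair μ χ ≤ ‖∫ z, μ z * χ z ∂vD‖ := by
    rw [pair]
    exact Complex.re_le_norm _
  have h2 : ‖∫ z, μ z * χ z ∂vD‖ ≤ ∫ z, ‖μ z * χ z‖ ∂vD :=
    norm_integral_le_integral_norm _
  have h3 : ∫ z, ‖μ z * χ z‖ ∂vD ≤ ∫ z, ‖χ z‖ ∂vD := by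
    apply integral_mono_of_nonneg (ae_of_all _ fun z => norm_nonneg _) hχ.norm
    apply ae_of_all
    intro z
    simp only []
    rw [norm_mul]
    calc ‖μ z‖ * ‖χ z‖ ≤ 1 * ‖χ z‖ :=
          mul_le_mul_of_nonneg_right (hb z) (norm_nonneg _)
      _ = ‖χ z‖ := one_mul _
  have h4 : ∫ z, ‖χ z‖ ∂vD = 1 := by
    rw [← hn, nrm]
  linarith

lemma bddAbove_pairs {μ : ℂ → ℂ} (hb : ∀ z, ‖μ z‖ ≤ 1) :
    BddAbove {r : ℝ | ∃ χ, AD χ ∧ nrm χ = 1 ∧ r = pair μ χ} := by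
  refine ⟨1, ?_⟩
  rintro r ⟨χ, hχ, hn, rfl⟩
  exact pair_le_one hb hχ.2 hn

lemma ang_eq_one (φ ψ : ℂ → ℂ) (hφ : AD φ) (hψ : AD ψ)
    (hnφ : nrm φ = 1) (hnψ : nrm ψ = 1)
    (h : ∀ s t : ℝ, 0 ≤ s → s < 1 → 0 ≤ t → t < 1 →
      lam (fun z => (s : ℂ) * tmu φ z - (t : ℂ) * tmu ψ z) = |s - t|) :
    (∫ z, tmu φ z * ψ z ∂vD).re = 1 := by
  set μ₀ : ℂ → ℂ :=
    fun z => (((1:ℝ)/2 : ℝ) : ℂ) * tmu φ z - (((1:ℝ)/2 : ℝ) : ℂ) * tmu ψ z with hμ₀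
  have hb : ∀ z, ‖μ₀ z‖ ≤ 1 := by
    intro z
    calc ‖μ₀ z‖ ≤ ‖(((1:ℝ)/2 : ℝ) : ℂ) * tmu φ z‖ + ‖(((1:ℝ)/2 : ℝ) : ℂ) * tmu ψ z‖ :=
          norm_sub_le _ _
      _ ≤ 1/2 * 1 + 1/2 * 1 := by
          gcongr
          · rw [norm_mul]
            have := tmu_norm_le φ z
            have h2 : ‖(((1:ℝ)/2 : ℝ) : ℂ)‖ = 1/2 := by
              rw [Complex.norm_real]; norm_num
            rw [h2]; nlinarith [norm_nonneg (tmu φ z)]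
          · rw [norm_mul]
            have := tmu_norm_le ψ z
            have h2 : ‖(((1:ℝ)/2 : ℝ) : ℂ)‖ = 1/2 := by
              rw [Complex.norm_real]; norm_num
            rw [h2]; nlinarith [norm_nonneg (tmu ψ z)]
      _ = 1 := by norm_num
  have hlam : lam μ₀ = 0 := by
    have := h (1/2) (1/2) (by norm_num) (by norm_num) (by norm_num) (by norm_num)
    simpa only [sub_self, abs_zero] using this
  have hBdd := bddAbove_pairs hb
  have hmemψ : pair μ₀ ψ ∈ {r : ℝ | ∃ χ, AD χ ∧ nrm χ = 1 ∧ r = pair μ₀ χ} :=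
    ⟨ψ, hψ, hnψ, rfl⟩
  have hle : pair μ₀ ψ ≤ 0 := hlam ▸ le_csSup hBdd hmemψ
  have hADneg : AD (fun z => -ψ z) := ⟨hψ.1.neg, hψ.2.neg⟩
  have hnneg : nrm (fun z => -ψ z) = 1 := by
    rw [← hnψ]; unfold nrm; simp
  have hpairneg : pair μ₀ (fun z => -ψ z) = -pair μ₀ ψ := by
    unfold pair
    simp only [mul_neg]
    rw [integral_neg, Complex.neg_re]
  have hmemneg : pair μ₀ (fun z => -ψ z) ∈
      {r : ℝ | ∃ χ, AD χ ∧ nrm χ = 1 ∧ r = pair μ₀ χ} :=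
    ⟨(fun z => -ψ z), hADneg, hnneg, rfl⟩
  have hge : pair μ₀ ψ = 0 := by
    have h2 : -pair μ₀ ψ ≤ 0 := by
      rw [← hpairneg]; exact hlam ▸ le_csSup hBdd hmemneg
    linarith
  -- expand pair μ₀ ψ
  have hint1 : Integrable (fun z => tmu φ z * ψ z) vD :=
    integrable_mul_of_bdd (tmu_aesm hφ) (tmu_norm_le φ) hψ.2
  have hint2 : Integrable (fun z => tmu ψ z * ψ z) vD :=
    integrable_mul_of_bdd (tmu_aesm hψ) (tmu_norm_le ψ) hψ.2
  have hexp : ∫ z, μ₀ z * ψ z ∂vD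
      = (((1:ℝ)/2 : ℝ) : ℂ) * (∫ z, tmu φ z * ψ z ∂vD)
        - (((1:ℝ)/2 : ℝ) : ℂ) * (∫ z, tmu ψ z * ψ z ∂vD) := by
    have : (fun z => μ₀ z * ψ z)
        = fun z => (((1:ℝ)/2 : ℝ) : ℂ) * (tmu φ z * ψ z)
            - (((1:ℝ)/2 : ℝ) : ℂ) * (tmu ψ z * ψ z) := by
      funext z; simp only [hμ₀]; ring
    rw [this, integral_sub (hint1.const_mul _) (hint2.const_mul _),
      integral_const_mul, integral_const_mul]
  have hself : ∫ z, tmu ψ z * ψ z ∂vD = ((nrm ψ : ℝ) : ℂ) := by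
    simp only [tmu_mul_self]
    exact integral_ofReal
  have : pair μ₀ ψ = 1/2 * (∫ z, tmu φ z * ψ z ∂vD).re - 1/2 := by
    unfold pair
    rw [hexp, hself, hnψ, Complex.sub_re, Complex.re_ofReal_mul, Complex.re_ofReal_mul]
    norm_num
  rw [this] at hge
  linarith

lemma ae_rel (φ ψ : ℂ → ℂ) (hφ : AD φ) (hψ : AD ψ) (hnψ : nrm ψ = 1)
    (hang : (∫ z, tmu φ z * ψ z ∂vD).re = 1) :
    ∀ᵐ z ∂vD, (starRingEnd ℂ) (φ z) * ψ z
      = ((‖φ z‖ * ‖ψ z‖ : ℝ) : ℂ) := by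
  have hint1 : Integrable (fun z => tmu φ z * ψ z) vD :=
    integrable_mul_of_bdd (tmu_aesm hφ) (tmu_norm_le φ) hψ.2
  set g : ℂ → ℝ := fun z => ‖ψ z‖ - (tmu φ z * ψ z).re with hg
  have hptle : ∀ z, (tmu φ z * ψ z).re ≤ ‖ψ z‖ := by
    intro z
    calc (tmu φ z * ψ z).re ≤ ‖tmu φ z * ψ z‖ := Complex.re_le_norm _
      _ = ‖tmu φ z‖ * ‖ψ z‖ := by
          rw [norm_mul]
      _ ≤ 1 * ‖ψ z‖ :=
          mul_le_mul_of_nonneg_right (tmu_norm_le φ z) (norm_nonneg _)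
      _ = ‖ψ z‖ := one_mul _
  have hgnn : 0 ≤ g := fun z => by simp only [hg, Pi.zero_apply]; linarith [hptle z]
  have habs_int : Integrable (fun z => ‖ψ z‖) vD := by
    have := hψ.2.norm
    simpa using this
  have hgint : Integrable g vD := by
    have := habs_int.sub hint1.re
    exact this
  have hgzero : ∫ z, g z ∂vD = 0 := by
    have hre : ∫ z, (tmu φ z * ψ z).re ∂vD = 1 := by
      have := integral_re hint1
      simp only [RCLike.re_to_complex] at this
      rw [this, hang]
    have : ∫ z, g z ∂vD = (∫ z, ‖ψ z‖ ∂vD) - ∫ z, (tmu φ z * ψ z).re ∂vD := by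
      simp only [hg]
      exact integral_sub habs_int hint1.re
    rw [this, hre]
    have : ∫ z, ‖ψ z‖ ∂vD = 1 := hnψ
    rw [this]; ring
  have hae : g =ᵐ[vD] 0 := (integral_eq_zero_iff_of_nonneg hgnn hgint).mp hgzero
  filter_upwards [hae] with z hz
  -- hz : g z = 0, so (tmu φ z * ψ z).re = abs (ψ z)
  have hre : (tmu φ z * ψ z).re = ‖ψ z‖ := by
    simp only [hg, Pi.zero_apply] at hz; linarith
  have habsle : ‖tmu φ z * ψ z‖ ≤ ‖ψ z‖ := by
    rw [norm_mul]
    calc ‖tmu φ z‖ * ‖ψ z‖ ≤ 1 * ‖ψ z‖ :=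
        mul_le_mul_of_nonneg_right (tmu_norm_le φ z) (norm_nonneg _)
      _ = _ := one_mul _
  -- hence tmu φ z * ψ z = abs (ψ z)
  have key : tmu φ z * ψ z = ((‖ψ z‖ : ℝ) : ℂ) := by
    set w := tmu φ z * ψ z with hw
    have h1 : ‖w‖ = w.re := le_antisymm (by rw [hre]; exact habsle) (Complex.re_le_norm w)
    have him : w.im = 0 := by
      have := Complex.sq_norm w
      rw [h1] at this
      rw [Complex.normSq_apply] at this
      nlinarith [sq_nonneg w.im]
    apply Complex.ext
    · simp [hre]
    · simp [him]
  -- now split on φ z = 0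
  rcases eq_or_ne (φ z) 0 with h0 | h0
  · have : tmu φ z = 0 := by simp [tmu, h0]
    rw [this, zero_mul] at key
    have : ‖ψ z‖ = 0 := by
      have := congrArg Complex.re key.symm
      simpa using this
    have hψ0 : ψ z = 0 := by
      exact norm_eq_zero.mp this
    simp [h0, hψ0]
  · have habs0 : ((‖φ z‖ : ℝ) : ℂ) ≠ 0 := by
      exact Complex.ofReal_ne_zero.mpr (norm_ne_zero_iff.mpr h0)
    have : (starRingEnd ℂ) (φ z) * ψ z
        = ((‖φ z‖ : ℝ) : ℂ) * ((‖ψ z‖ : ℝ) : ℂ) := by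
      have := key
      rw [tmu] at this
      field_simp at this
      rw [this]
    rw [this, ← Complex.ofReal_mul]

lemma final_step (φ ψ : ℂ → ℂ) (hφ : AD φ) (hψ : AD ψ)
    (hnφ : nrm φ = 1) (hnψ : nrm ψ = 1)
    (hrel : ∀ᵐ z ∂vD, (starRingEnd ℂ) (φ z) * ψ z
      = ((‖φ z‖ * ‖ψ z‖ : ℝ) : ℂ)) :
    ∀ᵐ z ∂vD, φ z = ψ z := by
  classical
  set P : ℂ → Prop := fun z => (starRingEnd ℂ) (φ z) * ψ z
      = ((‖φ z‖ * ‖ψ z‖ : ℝ) : ℂ) with hP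
  have h𝔻open : IsOpen 𝔻 := Metric.isOpen_ball
  have h𝔻meas : MeasurableSet 𝔻 := measurableSet_ball
  -- null bad set machinery
  have hnull : ∀ (S : Set ℂ), MeasurableSet S → S ⊆ 𝔻 → (∀ z ∈ S, ¬ P z) →
      MeasureTheory.volume S = 0 := by
    intro S hSmeas hS𝔻 hSbad
    have h1 : vD S = 0 := by
      have h2 : vD {z | ¬ P z} = 0 := by
        rw [← MeasureTheory.ae_iff.mp hrel]
      exact le_antisymm (h2 ▸ measure_mono (fun z hz => hSbad z hz)) zero_le
    rw [vD, Measure.restrict_apply hSmeas] at h1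
    rwa [Set.inter_eq_self_of_subset_left hS𝔻] at h1
  -- ψ is not identically zero on 𝔻
  have hz0 : ∃ z0 ∈ 𝔻, ψ z0 ≠ 0 := by
    by_contra hcon
    push_neg at hcon
    have : nrm ψ = 0 := by
      rw [nrm]
      rw [integral_congr_ae (g := fun _ => (0:ℝ))]
      · exact integral_zero _ _
      · have hmem : ∀ᵐ z ∂vD, z ∈ 𝔻 := MeasureTheory.ae_restrict_mem h𝔻meas
        filter_upwards [hmem] with z hz
        rw [hcon z hz]; simp
    rw [this] at hnψ; norm_num at hnψ
  obtain ⟨z0, hz0𝔻, hz0ne⟩ := hz0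
  -- ball around z0 where ψ ≠ 0
  have hVopen : IsOpen (𝔻 ∩ ψ ⁻¹' {(0:ℂ)}ᶜ) :=
    (hψ.1.continuousOn).isOpen_inter_preimage h𝔻open isOpen_compl_singleton
  obtain ⟨r, hr, hBV⟩ := Metric.isOpen_iff.mp hVopen z0 ⟨hz0𝔻, hz0ne⟩
  set B := Metric.ball z0 r with hBdef
  have hB𝔻 : B ⊆ 𝔻 := fun z hz => (hBV hz).1
  have hBne : ∀ z ∈ B, ψ z ≠ 0 := fun z hz => (hBV hz).2
  set f : ℂ → ℂ := fun z => φ z / ψ z with hf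
  have hfdiff : DifferentiableOn ℂ f B :=
    DifferentiableOn.div (hφ.1.mono hB𝔻) (hψ.1.mono hB𝔻) hBne
  have hfan : AnalyticOnNhd ℂ f B := hfdiff.analyticOnNhd Metric.isOpen_ball
  -- value of f at good points
  have hgood : ∀ z ∈ B, P z → f z = (((‖φ z‖ * ‖ψ z‖)
      / Complex.normSq (ψ z) : ℝ) : ℂ) := by
    intro z hz hPz
    have hψz := hBne z hz
    have hc' : φ z * (starRingEnd ℂ) (ψ z)
        = ((‖φ z‖ * ‖ψ z‖ : ℝ) : ℂ) := by
      have := congrArg (starRingEnd ℂ) hPz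
      simpa [map_mul, Complex.conj_conj, Complex.conj_ofReal, mul_comm] using this
    have hns : ((Complex.normSq (ψ z) : ℝ) : ℂ) ≠ 0 := by
      simp [Complex.normSq_eq_zero, hψz]
    rw [Complex.ofReal_div]
    rw [hf]
    rw [div_eq_div_iff hψz hns]
    calc φ z * ((Complex.normSq (ψ z) : ℝ) : ℂ)
        = φ z * (ψ z * (starRingEnd ℂ) (ψ z)) := by rw [Complex.mul_conj]
      _ = (φ z * (starRingEnd ℂ) (ψ z)) * ψ z := by ring
      _ = _ := by rw [hc']
  -- imaginary part of f vanishes on B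
  have hIm : ∀ z ∈ B, (f z).im = 0 := by
    intro z hz
    by_contra hcon
    have hWopen : IsOpen (B ∩ (fun w => (f w).im) ⁻¹' {(0:ℝ)}ᶜ) := by
      apply ContinuousOn.isOpen_inter_preimage _ Metric.isOpen_ball isOpen_compl_singleton
      exact Complex.continuous_im.comp_continuousOn hfdiff.continuousOn
    set W := B ∩ (fun w => (f w).im) ⁻¹' {(0:ℝ)}ᶜ with hW
    have hzW : z ∈ W := ⟨hz, hcon⟩
    have hWbad : ∀ w ∈ W, ¬ P w := by
      rintro w ⟨hwB, hwim⟩ hPw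
      apply hwim
      have := hgood w hwB hPw
      simp only [Set.mem_preimage, Set.mem_compl_iff, Set.mem_singleton_iff]
      rw [this, Complex.ofReal_im]
    have hWnull : MeasureTheory.volume W = 0 :=
      hnull W hWopen.measurableSet (fun w hw => hB𝔻 hw.1) hWbad
    have : (0:ENNReal) < MeasureTheory.volume W :=
      hWopen.measure_pos MeasureTheory.volume ⟨z, hzW⟩
    rw [hWnull] at this
    exact lt_irrefl _ this
  -- f is constant on B
  have hconst : ∃ c, ∀ z ∈ B, f z = c := by
    rcases hfan.is_constant_or_isOpen (convex_ball z0 r).isPreconnected with hc | hopen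
    · exact hc
    · exfalso
      have hopenB : IsOpen (f '' B) := hopen B subset_rfl Metric.isOpen_ball
      have hmem : f z0 ∈ f '' B := ⟨z0, Metric.mem_ball_self hr, rfl⟩
      obtain ⟨ε, hε, hball⟩ := Metric.isOpen_iff.mp hopenB (f z0) hmem
      have hmem2 : f z0 + ((ε/2 : ℝ) : ℂ) * Complex.I ∈ Metric.ball (f z0) ε := by
        rw [Metric.mem_ball, dist_eq_norm]
        simp only [add_sub_cancel_left]
        rw [norm_mul, Complex.norm_I, mul_one, Complex.norm_real]
        rw [Real.norm_eq_abs, abs_of_pos (by linarith)]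
        linarith
      obtain ⟨w, hwB, hweq⟩ := hball hmem2
      have h1 : (f w).im = 0 := hIm w hwB
      have h2 := congrArg Complex.im hweq
      rw [h1] at h2
      simp only [Complex.add_im, Complex.mul_im, Complex.I_im, Complex.I_re,
        Complex.ofReal_re, Complex.ofReal_im, mul_zero, mul_one, zero_mul] at h2
      have h3 := hIm z0 (Metric.mem_ball_self hr)
      rw [h3] at h2
      norm_num at h2
      linarith
  obtain ⟨c, hc⟩ := hconst
  -- φ = c ψ on B, then on 𝔻 by the identity principle
  have hcψ : ∀ z ∈ B, φ z = c * ψ z := by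
    intro z hz
    have := hc z hz
    rw [hf] at this
    field_simp [hBne z hz] at this
    rw [this, mul_comm]
  have hφan : AnalyticOnNhd ℂ φ 𝔻 := hφ.1.analyticOnNhd h𝔻open
  have hgan : AnalyticOnNhd ℂ (fun z => c * ψ z) 𝔻 :=
    analyticOnNhd_const.mul (hψ.1.analyticOnNhd h𝔻open)
  have h𝔻pre : IsPreconnected 𝔻 := (convex_ball (0:ℂ) 1).isPreconnected
  have hEq : Set.EqOn φ (fun z => c * ψ z) 𝔻 := by
    apply hφan.eqOn_of_preconnected_of_eventuallyEq hgan h𝔻pre hz0𝔻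
    exact Filter.eventuallyEq_of_mem (Metric.ball_mem_nhds z0 hr) hcψ
  -- properties of c
  have hcim : c.im = 0 := by
    rw [← hc z0 (Metric.mem_ball_self hr)]
    exact hIm z0 (Metric.mem_ball_self hr)
  have hcre : 0 ≤ c.re := by
    have hgoodpt : ∃ z1 ∈ B, P z1 := by
      by_contra hcon
      push_neg at hcon
      have : MeasureTheory.volume B = 0 :=
        hnull B measurableSet_ball hB𝔻 hcon
      have hp : (0:ENNReal) < MeasureTheory.volume B :=
        Metric.measure_ball_pos MeasureTheory.volume z0 hr
      rw [this] at hp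
      exact lt_irrefl _ hp
    obtain ⟨z1, hz1B, hz1P⟩ := hgoodpt
    have := hgood z1 hz1B hz1P
    rw [← hc z1 hz1B, this, Complex.ofReal_re]
    apply div_nonneg
    · positivity
    · exact Complex.normSq_nonneg _
  have habsc : ‖c‖ = 1 := by
    have h1 : nrm φ = ‖c‖ * nrm ψ := by
      rw [nrm, nrm, ← integral_const_mul]
      apply integral_congr_ae
      have hmem : ∀ᵐ z ∂vD, z ∈ 𝔻 := MeasureTheory.ae_restrict_mem h𝔻meas
      filter_upwards [hmem] with z hz
      rw [hEq hz]
      simp [norm_mul]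
    rw [hnφ, hnψ, mul_one] at h1
    exact h1.symm
  have hc1 : c = 1 := by
    have hcr : c = ((c.re : ℝ) : ℂ) := Complex.ext rfl (by simp [hcim])
    rw [hcr] at habsc
    rw [Complex.norm_real, Real.norm_eq_abs, _root_.abs_of_nonneg hcre] at habsc
    rw [hcr, habsc]
    norm_num
  rw [hc1] at hEq
  have hmem : ∀ᵐ z ∂vD, z ∈ 𝔻 := MeasureTheory.ae_restrict_mem h𝔻meas
  filter_upwards [hmem] with z hz
  have := hEq hz
  simpa using this

/-- if the two Teichmüller geodesics coincide infinitesimally, φ = ψ a.e. -/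
theorem stmt10 (φ ψ : ℂ → ℂ) (hφ : AD φ) (hψ : AD ψ)
    (hnφ : nrm φ = 1) (hnψ : nrm ψ = 1)
    (h : ∀ s t : ℝ, 0 ≤ s → s < 1 → 0 ≤ t → t < 1 →
      lam (fun z => (s : ℂ) * tmu φ z - (t : ℂ) * tmu ψ z) = |s - t|) :
    ∀ᵐ z ∂vD, φ z = ψ z := by
  have hang := ang_eq_one φ ψ hφ hψ hnφ hnψ h
  have hrel := ae_rel φ ψ hφ hψ hnψ hang
  exact final_step φ ψ hφ hψ hnφ hnψ hrel
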